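/- Let A be a unital algebra over a field, n ≥ 2, and a₀, a₁, …, a_{n−1} ∈ A such that aⱼaₖ = 0 for all j, k ∈ {0, …, n−1} except possibly when k = (j+1) mod n. Then σ(a₀ + a₁ + ⋯ + a_{n−1}) \ {0} = {λ : λⁿ ∈ σ(a₀a₁⋯a_{n−1})} \ {0}. -/

import Mathlib

open Finset

section auxcp
variable {A : Type*} [Ring A]

/-- product `b j * b (j+1) * ⋯ * b (j+m-1)` -/
private def cp (b : ℕ → A) (j m : ℕ) : A :=
  ((List.range m).map fun i => b (j + i)).prod

private theorem cp_zero (b : ℕ → A) (j : ℕ) : cp b j 0 = 1 := by simp [cp]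

private theorem cp_succ (b : ℕ → A) (j m : ℕ) :
    cp b j (m + 1) = b j * cp b (j + 1) m := by
  simp only [cp, List.range_succ_eq_map, List.map_cons, List.map_map, List.prod_cons, add_zero]
  congr 1
  congr 1
  apply List.map_congr_left
  intro i _
  simp only [Function.comp_apply]
  congr 1
  omega

private theorem cp_succ' (b : ℕ → A) (j m : ℕ) :
    cp b j (m + 1) = cp b j m * b (j + m) := by
  simp [cp, List.range_succ]

private theorem cp_one (b : ℕ → A) (j : ℕ) : cp b j 1 = b j := by
  rw [show (1 : ℕ) = 0 + 1 from rfl, cp_succ', cp_zero, one_mul, Nat.add_zero]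

private theorem cp_add (b : ℕ → A) (j m l : ℕ) :
    cp b j (m + l) = cp b j m * cp b (j + m) l := by
  induction l with
  | zero => simp [cp_zero]
  | succ l ih =>
      rw [← Nat.add_assoc, cp_succ', ih, cp_succ', mul_assoc]
      congr 3
      omega

private theorem cp_period {b : ℕ → A} {n : ℕ} (hper : ∀ i, b (i + n) = b i) (j m : ℕ) :
    cp b (j + n) m = cp b j m := by
  simp only [cp]
  congr 1
  apply List.map_congr_left
  intro i _
  rw [show j + n + i = (j + i) + n by omega, hper]

omit [Ring A] in
private theorem b_mod {b : ℕ → A} {n : ℕ} (hper : ∀ i, b (i + n) = b i) (i : ℕ) :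
    b (i % n) = b i := by
  have key : ∀ q r, b (r + q * n) = b r := by
    intro q
    induction q with
    | zero => simp
    | succ q ih => intro r; rw [show r + (q + 1) * n = (r + q * n) + n by ring, hper, ih]
  conv_rhs => rw [← Nat.mod_add_div' i n]
  exact (key _ _).symm

variable {b : ℕ → A} {n : ℕ}
  (hb : ∀ i k : ℕ, k % n ≠ (i + 1) % n → b i * b k = 0)

include hb

private theorem cp_mul_b {j m k : ℕ} (hm : m ≠ 0) (hk : k % n ≠ (j + m) % n) :
    cp b j m * b k = 0 := by
  obtain ⟨m', rfl⟩ : ∃ m', m = m' + 1 := ⟨m - 1, by omega⟩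
  rw [cp_succ', mul_assoc, hb _ _ (by rw [show j + m' + 1 = j + (m' + 1) by omega]; exact hk),
    mul_zero]

private theorem cp_mul_cp {j m k l : ℕ} (hm : m ≠ 0) (hl : l ≠ 0)
    (hk : k % n ≠ (j + m) % n) : cp b j m * cp b k l = 0 := by
  obtain ⟨l', rfl⟩ : ∃ l', l = l' + 1 := ⟨l - 1, by omega⟩
  rw [cp_succ, ← mul_assoc, cp_mul_b hb hm hk, zero_mul]

private theorem b_mul_cp {j k l : ℕ} (hl : l ≠ 0) (hk : k % n ≠ (j + 1) % n) :
    b j * cp b k l = 0 := by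
  obtain ⟨l', rfl⟩ : ∃ l', l = l' + 1 := ⟨l - 1, by omega⟩
  rw [cp_succ, ← mul_assoc, hb _ _ hk, zero_mul]

private theorem sum_pow_eq (hper : ∀ i, b (i + n) = b i) (hn : n ≠ 0) :
    ∀ m, m ≠ 0 → (∑ j ∈ range n, b j) ^ m = ∑ j ∈ range n, cp b j m := by
  intro m hm
  obtain ⟨m, rfl⟩ : ∃ m', m = m' + 1 := ⟨m - 1, by omega⟩
  clear hm
  induction m with
  | zero => simp [cp_one]
  | succ m ih =>
      rw [pow_succ, ih, sum_mul]
      refine Finset.sum_congr rfl fun j hj => ?_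
      rw [mul_sum]
      rw [Finset.sum_eq_single_of_mem ((j + (m + 1)) % n)
        (Finset.mem_range.mpr (Nat.mod_lt _ (by omega)))]
      · rw [b_mod hper, ← cp_succ']
      · intro k hk hkne
        exact cp_mul_b hb (by omega) (by rw [Nat.mod_eq_of_lt (Finset.mem_range.mp hk)]; exact hkne)

end auxcp

section auxunit

private theorem aux_unit {A : Type*} [Monoid A] {x u v : A}
    (h1 : x * u = 1) (h2 : v * x = 1) : IsUnit x := by
  have huv : v = u := by rw [← mul_one v, ← h1, ← mul_assoc, h2, one_mul]
  exact ⟨⟨x, u, h1, huv ▸ h2⟩, rfl⟩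

end auxunit
theorem spectrum_cyclic_sum
    {𝕜 A : Type*} [Field 𝕜] [Ring A] [Algebra 𝕜 A]
    (n : ℕ) (hn : 2 ≤ n) (a : Fin n → A)
    (h : ∀ j k : Fin n, (k : ℕ) ≠ ((j : ℕ) + 1) % n → a j * a k = 0) :
    spectrum 𝕜 (∑ j, a j) \ {0}
      = {μ : 𝕜 | μ ^ n ∈ spectrum 𝕜 (List.ofFn a).prod} \ {0} := by
  obtain ⟨N, rfl⟩ : ∃ N, n = N + 2 := ⟨n - 2, by omega⟩
  have hn0 : 0 < (N + 2) := by omega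
  set b : ℕ → A := fun i => a ⟨i % (N + 2), Nat.mod_lt i hn0⟩ with hbdef
  have hper : ∀ i, b (i + (N + 2)) = b i := fun i => by simp [hbdef]
  have h1n : 1 % (N + 2) = 1 := Nat.mod_eq_of_lt (by omega)
  have hb : ∀ i k : ℕ, k % (N + 2) ≠ (i + 1) % (N + 2) → b i * b k = 0 := by
    intro i k hik
    rw [Nat.add_mod i 1 (N + 2), h1n] at hik
    exact h ⟨i % (N + 2), Nat.mod_lt i hn0⟩ ⟨k % (N + 2), Nat.mod_lt k hn0⟩ hik
  have hsum : (∑ j, a j) = ∑ j ∈ Finset.range (N + 2), b j := by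
    rw [← Fin.sum_univ_eq_sum_range]
    refine Finset.sum_congr rfl fun j _ => ?_
    simp [hbdef, Nat.mod_eq_of_lt j.isLt]
  have hprod : (List.ofFn a).prod = cp b 0 (N + 2) := by
    have key : ∀ (m : ℕ) (j : ℕ) (g : Fin m → A), (∀ i : Fin m, g i = b (j + i)) →
        (List.ofFn g).prod = cp b j m := by
      intro m
      induction m with
      | zero => intro j g _; simp [cp_zero]
      | succ m ih =>
          intro j g hg
          rw [List.ofFn_succ, List.prod_cons, cp_succ]
          congr 1
          · rw [hg 0]; simp
          · exact ih (j + 1) (fun i => g i.succ)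
              (fun i => by show g i.succ = _; rw [hg i.succ]; congr 1
                           simp [Fin.val_succ]; omega)
    exact key (N + 2) 0 a fun i => by simp [hbdef, Nat.mod_eq_of_lt i.isLt]
  rw [hsum, hprod]
  ext μ
  simp only [Set.mem_diff, Set.mem_singleton_iff, Set.mem_setOf_eq]
  refine and_congr_left fun hμ => ?_
  rw [spectrum.mem_iff, spectrum.mem_iff, not_iff_not, Algebra.algebraMap_eq_smul_one,
    Algebra.algebraMap_eq_smul_one]
  set s : A := ∑ j ∈ Finset.range (N + 2), b j with hs
  have hμn : (μ ^ (N + 2) : 𝕜) ≠ 0 := pow_ne_zero (N + 2) hμ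
  have horth : ∀ j ∈ Finset.range (N + 2), ∀ k ∈ Finset.range (N + 2), j ≠ k →
      cp b j (N + 2) * cp b k (N + 2) = 0 := by
    intro j hj k hk hjk
    refine cp_mul_cp hb (by omega) (by omega) ?_
    rw [Nat.mod_eq_of_lt (Finset.mem_range.mp hk), Nat.add_mod_right,
      Nat.mod_eq_of_lt (Finset.mem_range.mp hj)]
    exact fun e => hjk e.symm
  have hsn : s ^ (N + 2) = ∑ j ∈ Finset.range (N + 2), cp b j (N + 2) :=
    sum_pow_eq hb hper (by omega) (N + 2) (by omega)
  have hcomm : Commute (μ • (1 : A)) s := by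
    unfold Commute SemiconjBy
    rw [smul_mul_assoc, one_mul, mul_smul_comm, mul_one]
  set G : A := ∑ i ∈ Finset.range (N + 2), μ ^ i • s ^ ((N + 2) - 1 - i) with hG
  have hGeq : G = ∑ i ∈ Finset.range (N + 2), (μ • (1 : A)) ^ i * s ^ ((N + 2) - 1 - i) := by
    refine Finset.sum_congr rfl fun i _ => ?_
    rw [smul_pow, one_pow, smul_mul_assoc, one_mul]
  have hpow : (μ • (1 : A)) ^ (N + 2) = μ ^ (N + 2) • 1 := by rw [smul_pow, one_pow]
  have hG1 : (μ • (1 : A) - s) * G = μ ^ (N + 2) • (1 : A) - s ^ (N + 2) := by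
    rw [hGeq, hcomm.mul_geom_sum₂, hpow]
  have hG2 : G * (μ • (1 : A) - s) = μ ^ (N + 2) • (1 : A) - s ^ (N + 2) := by
    rw [hGeq, hcomm.geom_sum₂_mul, hpow]
  constructor
  · -- IsUnit (μ•1 - s) → IsUnit (μ^(N + 2)•1 - cp b 0 (N + 2))
    intro hu
    obtain ⟨u, hu⟩ := hu
    set r : A := ↑u⁻¹ with hrdef
    have hr1 : (μ • (1 : A) - s) * r = 1 := by rw [← hu]; exact u.mul_inv
    have hr2 : r * (μ • (1 : A) - s) = 1 := by rw [← hu]; exact u.inv_mul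
    set t : A := cp b 1 (N + 1) with ht
    have hc0Y : cp b 0 (N + 2) = b 0 * t := cp_succ b 0 (N + 1)
    have hc1 : cp b 1 (N + 2) = t * b 0 := by
      rw [show ((N + 2) : ℕ) = (N + 1) + 1 from rfl, cp_succ' b 1 (N + 1)]
      congr 1
      rw [show 1 + (N + 1) = 0 + (N + 2) by omega, hper 0]
    have hbst : ∀ k, k ≠ 0 → k ≤ N + 1 → b 0 * (s ^ k * t) = 0 := by
      intro k hk0 hkle
      rw [sum_pow_eq hb hper (by omega) k hk0, Finset.sum_mul, Finset.mul_sum]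
      refine Finset.sum_eq_zero fun j hj => ?_
      by_cases hj1 : j = 1
      · subst hj1
        have hne : (1 + k) % (N + 2) ≠ 1 := by
          rcases Nat.lt_or_ge (1 + k) (N + 2) with hlt | hge
          · rw [Nat.mod_eq_of_lt hlt]; omega
          · rw [show (1 + k) = (N + 2) by omega, Nat.mod_self]; omega
        rw [cp_mul_cp hb hk0 (by omega) (by rw [h1n]; exact fun e => hne e.symm), mul_zero]
      · rw [← mul_assoc, b_mul_cp hb hk0 ?cond, zero_mul]
        case cond =>
          rw [Nat.mod_eq_of_lt (Finset.mem_range.mp hj), Nat.zero_add, h1n]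
          exact hj1
    have hb0G : b 0 * (G * t) = μ ^ (N + 1) • (b 0 * t) := by
      rw [hG, Finset.sum_mul, Finset.mul_sum,
        Finset.sum_eq_single_of_mem (N + 1) (Finset.mem_range.mpr (by omega))]
      · rw [show (N + 2) - 1 - (N + 1) = 0 by omega, pow_zero, smul_mul_assoc, one_mul,
          mul_smul_comm]
      · intro i hi hine
        rw [smul_mul_assoc, mul_smul_comm,
          hbst _ (by have := Finset.mem_range.mp hi; omega)
            (by have := Finset.mem_range.mp hi; omega), smul_zero]
    have hb0sn : b 0 * s ^ (N + 2) = b 0 * cp b 1 (N + 2) := by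
      rw [hsn, Finset.mul_sum,
        Finset.sum_eq_single_of_mem 1 (Finset.mem_range.mpr (by omega))]
      intro j hj hj1
      refine b_mul_cp hb (by omega) ?_
      rw [Nat.mod_eq_of_lt (Finset.mem_range.mp hj), Nat.zero_add, h1n]
      exact hj1
    have hsnt : s ^ (N + 2) * t = cp b 1 (N + 2) * t := by
      rw [hsn, Finset.sum_mul,
        Finset.sum_eq_single_of_mem 1 (Finset.mem_range.mpr (by omega))]
      intro j hj hj1
      refine cp_mul_cp hb (by omega) (by omega) ?_
      rw [h1n, Nat.add_mod_right, Nat.mod_eq_of_lt (Finset.mem_range.mp hj)]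
      exact fun e => hj1 e.symm
    set X : A := b 0 * (r * t) with hX
    set Y : A := b 0 * t with hY
    have key1 : Y * X = μ ^ (N + 2) • X - μ ^ (N + 1) • Y := by
      have e1 : Y * X = b 0 * (s ^ (N + 2) * (r * t)) := by
        calc (b 0 * t) * (b 0 * (r * t)) = b 0 * ((t * b 0) * (r * t)) := by
              rw [mul_assoc, ← mul_assoc t]
        _ = (b 0 * cp b 1 (N + 2)) * (r * t) := by rw [← hc1, mul_assoc]
        _ = (b 0 * s ^ (N + 2)) * (r * t) := by rw [← hb0sn]
        _ = b 0 * (s ^ (N + 2) * (r * t)) := by rw [mul_assoc]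
      have e2 : (μ ^ (N + 2) • (1 : A) - s ^ (N + 2)) * r = G := by
        rw [← hG2, mul_assoc, hr1, mul_one]
      have e3 : μ ^ (N + 2) • X - Y * X = μ ^ (N + 1) • Y := by
        rw [e1, hX]
        calc μ ^ (N + 2) • (b 0 * (r * t)) - b 0 * (s ^ (N + 2) * (r * t))
            = b 0 * (((μ ^ (N + 2) • (1 : A) - s ^ (N + 2)) * r) * t) := by
              simp only [sub_mul, mul_sub, smul_mul_assoc, mul_smul_comm, one_mul,
                mul_one, mul_assoc]
        _ = b 0 * (G * t) := by rw [e2]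
        _ = μ ^ (N + 1) • Y := hb0G
      rw [← e3]; abel
    have key2 : X * Y = μ ^ (N + 2) • X - μ ^ (N + 1) • Y := by
      have e1 : X * Y = b 0 * (r * (s ^ (N + 2) * t)) := by
        calc (b 0 * (r * t)) * (b 0 * t) = b 0 * (r * ((t * b 0) * t)) := by
              rw [mul_assoc, mul_assoc, mul_assoc, ← mul_assoc t]
        _ = b 0 * (r * (cp b 1 (N + 2) * t)) := by rw [← hc1]
        _ = b 0 * (r * (s ^ (N + 2) * t)) := by rw [← hsnt]
      have e2 : r * ((μ ^ (N + 2) • (1 : A) - s ^ (N + 2)) * t) = G * t := by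
        rw [← hG1, mul_assoc, ← mul_assoc r, hr2, one_mul]
      have e3 : μ ^ (N + 2) • X - X * Y = μ ^ (N + 1) • Y := by
        rw [e1, hX]
        calc μ ^ (N + 2) • (b 0 * (r * t)) - b 0 * (r * (s ^ (N + 2) * t))
            = b 0 * (r * (((μ ^ (N + 2) • (1 : A) - s ^ (N + 2))) * t)) := by
              simp only [sub_mul, mul_sub, smul_mul_assoc, mul_smul_comm, one_mul,
                mul_one, mul_assoc]
        _ = b 0 * (G * t) := by rw [e2]
        _ = μ ^ (N + 1) • Y := hb0G
      rw [← e3]; abel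
    set V : A := (μ ^ (N + 2))⁻¹ • (1 : A) + ((μ ^ (N + 2))⁻¹ * (μ ^ (N + 1))⁻¹) • X with hV
    have hV1 : (μ ^ (N + 2) • (1 : A) - Y) * V = 1 := by
      rw [hV]
      simp only [mul_add, add_mul, sub_mul, mul_sub, smul_mul_assoc, mul_smul_comm,
        one_mul, mul_one, smul_smul]
      rw [key1]
      simp only [smul_sub, smul_smul]
      match_scalars <;> (field_simp; try ring)
    have hV2 : V * (μ ^ (N + 2) • (1 : A) - Y) = 1 := by
      rw [hV]
      simp only [mul_add, add_mul, sub_mul, mul_sub, smul_mul_assoc, mul_smul_comm,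
        one_mul, mul_one, smul_smul]
      rw [key2]
      simp only [smul_sub, smul_smul]
      match_scalars <;> (field_simp; try ring)
    rw [hc0Y]
    exact aux_unit hV1 hV2
  · -- IsUnit (μ^(N + 2)•1 - cp b 0 (N + 2)) → IsUnit (μ•1 - s)
    intro hu
    have hA1 : ∀ j ∈ Finset.range (N + 2), IsUnit (μ ^ (N + 2) • (1 : A) - cp b j (N + 2)) := by
      intro j hj
      have hjlt : j < N + 2 := Finset.mem_range.mp hj
      rcases Nat.eq_zero_or_pos j with rfl | hjpos
      · exact hu
      · have hx : cp b j (N + 2) = cp b j ((N + 2) - j) * cp b 0 j := by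
          have e := cp_add b j ((N + 2) - j) j
          rw [show ((N + 2) - j) + j = (N + 2) by omega] at e
          rw [e]
          congr 1
          rw [show j + ((N + 2) - j) = 0 + (N + 2) by omega, cp_period hper 0]
        have hy : cp b 0 j * cp b j ((N + 2) - j) = cp b 0 (N + 2) := by
          have e := cp_add b 0 j ((N + 2) - j)
          rw [show j + ((N + 2) - j) = (N + 2) by omega, Nat.zero_add] at e
          exact e.symm
        rw [hx]
        have h0 : (μ ^ (N + 2)) ∉ spectrum 𝕜 (cp b 0 j * cp b j ((N + 2) - j)) := by
          rw [spectrum.notMem_iff, Algebra.algebraMap_eq_smul_one, hy]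
          exact hu
        have h1 : (μ ^ (N + 2)) ∉ spectrum 𝕜 (cp b j ((N + 2) - j) * cp b 0 j) := by
          intro hmem
          have hd : μ ^ (N + 2) ∈ spectrum 𝕜 (cp b j ((N + 2) - j) * cp b 0 j) \ {0} :=
            ⟨hmem, by simpa using hμn⟩
          rw [spectrum.nonzero_mul_comm] at hd
          exact h0 hd.1
        rw [← Algebra.algebraMap_eq_smul_one]
        exact spectrum.notMem_iff.mp h1
    have hchoice : ∀ j, ∃ w : A, j ∈ Finset.range (N + 2) →
        ((μ ^ (N + 2) • (1 : A) - cp b j (N + 2)) * w = 1 ∧ w * (μ ^ (N + 2) • (1 : A) - cp b j (N + 2)) = 1) := by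
      intro j
      by_cases hj : j ∈ Finset.range (N + 2)
      · obtain ⟨u, hu'⟩ := hA1 j hj
        exact ⟨↑u⁻¹, fun _ => by rw [← hu']; exact ⟨u.mul_inv, u.inv_mul⟩⟩
      · exact ⟨0, fun hc => absurd hc hj⟩
    choose W hW using hchoice
    set S : A := ∑ j ∈ Finset.range (N + 2), cp b j (N + 2) with hS
    have hsnS : s ^ (N + 2) = S := hsn
    have hterm1 : ∀ j ∈ Finset.range (N + 2),
        (μ ^ (N + 2) • (1 : A) - S) * W j = 1 - (μ ^ (N + 2))⁻¹ • (S - cp b j (N + 2)) := by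
      intro j hj
      have hrw : μ ^ (N + 2) • (1 : A) - S = (μ ^ (N + 2) • (1 : A) - cp b j (N + 2)) - (S - cp b j (N + 2)) := by
        abel
      rw [hrw, sub_mul, (hW j hj).1]
      congr 1
      have hsd : S - cp b j (N + 2) = ∑ k ∈ Finset.range (N + 2) \ {j}, cp b k (N + 2) := by
        rw [hS, eq_comm, Finset.sum_sdiff_eq_sub (Finset.singleton_subset_iff.mpr hj),
          Finset.sum_singleton]
      rw [hsd, Finset.sum_mul, Finset.smul_sum]
      refine Finset.sum_congr rfl fun k hk => ?_
      obtain ⟨hk1, hk2⟩ := Finset.mem_sdiff.mp hk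
      have hkj : k ≠ j := by simpa using hk2
      -- c k * W j = (μ^(N + 2))⁻¹ • c k
      have hck0 : cp b k (N + 2) * cp b j (N + 2) = 0 := horth k hk1 j hj hkj
      have hstep : μ ^ (N + 2) • (cp b k (N + 2) * W j) = cp b k (N + 2) := by
        calc μ ^ (N + 2) • (cp b k (N + 2) * W j)
            = (cp b k (N + 2) * (μ ^ (N + 2) • (1 : A) - cp b j (N + 2))) * W j := by
              rw [mul_sub, mul_smul_comm, mul_one, hck0, sub_zero, smul_mul_assoc]
        _ = cp b k (N + 2) * ((μ ^ (N + 2) • (1 : A) - cp b j (N + 2)) * W j) := by rw [mul_assoc]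
        _ = cp b k (N + 2) := by rw [(hW j hj).1, mul_one]
      calc cp b k (N + 2) * W j
          = (μ ^ (N + 2))⁻¹ • (μ ^ (N + 2) • (cp b k (N + 2) * W j)) := by
            rw [smul_smul, inv_mul_cancel₀ hμn, one_smul]
      _ = (μ ^ (N + 2))⁻¹ • cp b k (N + 2) := by rw [hstep]
    have hterm2 : ∀ j ∈ Finset.range (N + 2),
        W j * (μ ^ (N + 2) • (1 : A) - S) = 1 - (μ ^ (N + 2))⁻¹ • (S - cp b j (N + 2)) := by
      intro j hj
      have hrw : μ ^ (N + 2) • (1 : A) - S = (μ ^ (N + 2) • (1 : A) - cp b j (N + 2)) - (S - cp b j (N + 2)) := by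
        abel
      rw [hrw, mul_sub, (hW j hj).2]
      congr 1
      have hsd : S - cp b j (N + 2) = ∑ k ∈ Finset.range (N + 2) \ {j}, cp b k (N + 2) := by
        rw [hS, eq_comm, Finset.sum_sdiff_eq_sub (Finset.singleton_subset_iff.mpr hj),
          Finset.sum_singleton]
      rw [hsd, Finset.mul_sum, Finset.smul_sum]
      refine Finset.sum_congr rfl fun k hk => ?_
      obtain ⟨hk1, hk2⟩ := Finset.mem_sdiff.mp hk
      have hkj : k ≠ j := by simpa using hk2
      have hcj0 : cp b j (N + 2) * cp b k (N + 2) = 0 := horth j hj k hk1 fun e => hkj e.symm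
      have hstep : μ ^ (N + 2) • (W j * cp b k (N + 2)) = cp b k (N + 2) := by
        calc μ ^ (N + 2) • (W j * cp b k (N + 2))
            = W j * ((μ ^ (N + 2) • (1 : A) - cp b j (N + 2)) * cp b k (N + 2)) := by
              rw [sub_mul, smul_mul_assoc, one_mul, hcj0, sub_zero, mul_smul_comm]
        _ = (W j * (μ ^ (N + 2) • (1 : A) - cp b j (N + 2))) * cp b k (N + 2) := by rw [mul_assoc]
        _ = cp b k (N + 2) := by rw [(hW j hj).2, one_mul]
      calc W j * cp b k (N + 2)
          = (μ ^ (N + 2))⁻¹ • (μ ^ (N + 2) • (W j * cp b k (N + 2))) := by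
            rw [smul_smul, inv_mul_cancel₀ hμn, one_smul]
      _ = (μ ^ (N + 2))⁻¹ • cp b k (N + 2) := by rw [hstep]
    set V2 : A := (∑ j ∈ Finset.range (N + 2), W j) - (((N + 1 : ℕ) : 𝕜) * (μ ^ (N + 2))⁻¹) • 1 with hV2
    have hcommon : (∑ j ∈ Finset.range (N + 2), ((1 : A) - (μ ^ (N + 2))⁻¹ • (S - cp b j (N + 2))))
        - (((N + 1 : ℕ) : 𝕜) * (μ ^ (N + 2))⁻¹) • (μ ^ (N + 2) • (1 : A) - S) = 1 := by
      simp only [Finset.sum_sub_distrib, Finset.sum_const, Finset.card_range, smul_sub,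
        smul_smul]
      rw [← Finset.smul_sum, ← hS]
      match_scalars <;> push_cast <;> field_simp <;> ring
    have hSV : (μ ^ (N + 2) • (1 : A) - S) * V2 = 1 := by
      rw [hV2, mul_sub, Finset.mul_sum, Finset.sum_congr rfl hterm1, mul_smul_comm, mul_one]
      exact hcommon
    have hVS : V2 * (μ ^ (N + 2) • (1 : A) - S) = 1 := by
      rw [hV2, sub_mul, Finset.sum_mul, Finset.sum_congr rfl hterm2, smul_mul_assoc, one_mul]
      exact hcommon
    have hSunit : IsUnit (μ ^ (N + 2) • (1 : A) - S) := ⟨⟨_, V2, hSV, hVS⟩, rfl⟩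
    obtain ⟨u2, hu2⟩ := hSunit
    have hfin1 : (μ • (1 : A) - s) * (G * ↑u2⁻¹) = 1 := by
      rw [← mul_assoc, hG1, hsnS, ← hu2]; exact u2.mul_inv
    have hfin2 : ((↑u2⁻¹ : A) * G) * (μ • (1 : A) - s) = 1 := by
      rw [mul_assoc, hG2, hsnS, ← hu2]; exact u2.inv_mul
    exact aux_unit hfin1 hfin2
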